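/- Let q = 2^m with m odd, m ≥ 3. Then for any two distinct elements a, b ∈ F_q, the polynomial u(x) = x^2 + (a+b)x + a^2 + b^2 + ab has no root in F_q. Equivalently, for any c ∈ F_q, a^2 + b^2 + c^2 + ab + ac + bc ≠ 0. -/

import Mathlib

lemma char_is_two (m : ℕ) (F : Type*) [Field F] [Fintype F]
    (hF : Fintype.card F = 2 ^ m) : ringChar F = 2 := by
  obtain ⟨n, hp, hc⟩ := FiniteField.card F (ringChar F)
  have hdvd : ringChar F ∣ 2 ^ m := by
    rw [← hF, hc]
    exact dvd_pow_self _ (by exact_mod_cast n.pos.ne')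
  exact (Nat.prime_dvd_prime_iff_eq hp Nat.prime_two).1 (hp.dvd_of_dvd_pow hdvd)

lemma no_cube_root (m : ℕ) (hmo : Odd m) (F : Type*) [Field F] [Fintype F]
    (hF : Fintype.card F = 2 ^ m) (u : F) : u ^ 2 + u + 1 ≠ 0 := by
  intro h
  have hu0 : u ≠ 0 := by rintro rfl; simp at h
  have hu3 : u ^ 3 = 1 := by linear_combination (u - 1) * h
  have h3 : ¬ (3 ∣ 2 ^ m - 1) := by
    intro hd
    have h1 : 1 ≤ 2 ^ m := Nat.one_le_two_pow
    have : ((2 ^ m - 1 : ℕ) : ZMod 3) = 0 := by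
      exact_mod_cast (ZMod.natCast_eq_zero_iff _ 3).2 hd
    rw [Nat.cast_sub h1] at this
    have h2 : ((2 : ℕ) : ZMod 3) = -1 := by decide
    rw [Nat.cast_pow, h2, hmo.neg_one_pow] at this
    exact absurd this (by decide)
  have ho3 : orderOf u ∣ 3 := orderOf_dvd_of_pow_eq_one hu3
  have hoq : orderOf u ∣ 2 ^ m - 1 := by
    apply orderOf_dvd_of_pow_eq_one
    rw [← hF]
    exact FiniteField.pow_card_sub_one_eq_one u hu0
  have hgcd : Nat.gcd 3 (2 ^ m - 1) = 1 :=
    (Nat.Prime.coprime_iff_not_dvd Nat.prime_three).2 h3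
  have : orderOf u = 1 := Nat.eq_one_of_dvd_coprimes hgcd ho3 hoq
  have hu1 : u = 1 := orderOf_eq_one_iff.1 this
  have hchar : ringChar F = 2 := char_is_two m F hF
  haveI : CharP F 2 := hchar ▸ ringChar.charP F
  have htwo : (2 : F) = 0 := by exact_mod_cast CharP.cast_eq_zero F 2
  rw [hu1] at h
  have : (1 : F) = 0 := by linear_combination h - htwo
  simp at this

theorem stmt5 (m : ℕ) (hm : 3 ≤ m) (hmo : Odd m)
    (F : Type*) [Field F] [Fintype F] (hF : Fintype.card F = 2 ^ m)
    (a b : F) (hab : a ≠ b) :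
    (∀ x : F, x ^ 2 + (a + b) * x + (a ^ 2 + b ^ 2 + a * b) ≠ 0) ∧
    (∀ c : F, a ^ 2 + b ^ 2 + c ^ 2 + a * b + a * c + b * c ≠ 0) := by
  have hchar : ringChar F = 2 := char_is_two m F hF
  haveI : CharP F 2 := hchar ▸ ringChar.charP F
  have htwo : (2 : F) = 0 := by exact_mod_cast CharP.cast_eq_zero F 2
  have hd : a + b ≠ 0 := by
    intro h0
    apply hab
    have : a - b = 0 := by linear_combination h0 - b * htwo
    exact sub_eq_zero.1 this
  have key : ∀ x : F, x ^ 2 + (a + b) * x + (a ^ 2 + b ^ 2 + a * b) ≠ 0 := by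
    intro x hx
    set d := a + b with hdd
    set u := (x + b) / d with hu
    have expand : d ^ 2 * (u ^ 2 + u + 1) = (x + b) ^ 2 + d * (x + b) + d ^ 2 := by
      rw [hu]
      field_simp
    have hzero : d ^ 2 * (u ^ 2 + u + 1) = 0 := by
      rw [expand, hdd]
      linear_combination hx + (b * x + b ^ 2 + a * b) * htwo
    have := mul_eq_zero.1 hzero
    rcases this with h | h
    · exact pow_ne_zero 2 hd h
    · exact no_cube_root m hmo F hF u h
  refine ⟨key, fun c hc => key c ?_⟩
  linear_combination hc
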